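/- Let Σ be a finite alphabet with |Σ| ≥ 2 and k, n with (k - log₂ k - 5)·log₂|Σ| ≤ log₂ n - log₂ log₂ n. Then the VC dimension of H_{k,Σ} on strings of length n is at least ⌊(m-1)·log₂|Σ|⌋ where m = ⌊min(k - log₂ k - 3, log₂ n/log₂|Σ| - log₂ log₂ n/log₂|Σ| + 1)⌋ ≥ 1; i.e., VC(H_{k,Σ}) ≥ min((k - O(log k))·log|Σ|, log n - O(log log n)). -/

import Mathlib

/-- Pattern `p` (a list) occurs as a contiguous substring of `s : Fin n → A`. -/
def occursL {A : Type} {n : ℕ} (p : List A) (s : Fin n → A) : Prop :=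
  ∃ i, ∃ _ : i + p.length ≤ n,
    ∀ t : Fin p.length, s ⟨i + t.val, by have := t.isLt; omega⟩ = p.get t


def natOf : List Bool → ℕ
  | [] => 0
  | x :: xs => (cond x 1 0) + 2 * natOf xs

lemma natOf_lt (l : List Bool) : natOf l < 2 ^ l.length := by
  induction l with
  | nil => simp [natOf]
  | cons x xs ih =>
    simp only [natOf, List.length_cons, pow_succ]
    cases x <;> simp <;> omega

lemma natOf_bit (l : List Bool) (i : ℕ) :
    (natOf l / 2 ^ i) % 2 = cond (l.getD i false) 1 0 := by
  induction l generalizing i with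
  | nil => simp [natOf]
  | cons x xs ih =>
    cases i with
    | zero =>
      simp only [natOf, pow_zero, Nat.div_one, List.getD_cons_zero]
      cases x <;> simp <;> omega
    | succ i =>
      have h1 : natOf (x :: xs) / 2 ^ (i+1) = natOf xs / 2 ^ i := by
        rw [pow_succ, mul_comm (2^i) 2, ← Nat.div_div_eq_div_mul]
        congr 1
        simp only [natOf]
        cases x <;> simp <;> omega
      rw [h1, ih]
      simp

def insB (i u : ℕ) : ℕ := 2 ^ (i+1) * (u / 2 ^ i) + 2 ^ i + u % 2 ^ i

def delB (i j : ℕ) : ℕ := 2 ^ i * (j / 2 ^ (i+1)) + j % 2 ^ i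

lemma insB_lt (d i u : ℕ) (hi : i < d) (hu : u < 2 ^ (d-1)) : insB i u < 2 ^ d := by
  have h1 : 2 ^ (d-1) = 2 ^ i * 2 ^ (d-1-i) := by rw [← pow_add]; congr 1; omega
  have h2 : 2 ^ d = 2 ^ (i+1) * 2 ^ (d-1-i) := by rw [← pow_add]; congr 1; omega
  have h3 : u / 2 ^ i < 2 ^ (d-1-i) := by
    rw [Nat.div_lt_iff_lt_mul (by positivity), mul_comm, ← h1]; exact hu
  have h4 : u % 2 ^ i < 2 ^ i := Nat.mod_lt _ (by positivity)
  calc insB i u = 2 ^ (i+1) * (u / 2^i) + 2^i + u % 2^i := rfl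
    _ < 2 ^ (i+1) * (u / 2^i) + 2^(i+1) := by rw [pow_succ]; omega
    _ = 2 ^ (i+1) * (u / 2^i + 1) := by ring
    _ ≤ 2 ^ (i+1) * 2 ^ (d-1-i) := Nat.mul_le_mul_left _ (by omega)
    _ = 2 ^ d := h2.symm

lemma insB_bit (i u : ℕ) : (insB i u / 2 ^ i) % 2 = 1 := by
  have h4 : u % 2 ^ i < 2 ^ i := Nat.mod_lt _ (by positivity)
  have h : insB i u = 2 ^ i * (2 * (u / 2^i) + 1) + u % 2^i := by
    simp only [insB, pow_succ]; ring
  rw [h, Nat.mul_add_div (by positivity), Nat.div_eq_of_lt h4]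
  omega

lemma delB_lt (d i j : ℕ) (hi : i < d) (hj : j < 2 ^ d) : delB i j < 2 ^ (d-1) := by
  have h1 : 2 ^ (d-1) = 2 ^ i * 2 ^ (d-1-i) := by rw [← pow_add]; congr 1; omega
  have h2 : 2 ^ d = 2 ^ (i+1) * 2 ^ (d-1-i) := by rw [← pow_add]; congr 1; omega
  have h3 : j / 2 ^ (i+1) < 2 ^ (d-1-i) := by
    rw [Nat.div_lt_iff_lt_mul (by positivity), mul_comm, ← h2]; exact hj
  have h4 : j % 2 ^ i < 2 ^ i := Nat.mod_lt _ (by positivity)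
  calc delB i j = 2 ^ i * (j / 2^(i+1)) + j % 2^i := rfl
    _ < 2 ^ i * (j / 2^(i+1)) + 2^i := by omega
    _ = 2 ^ i * (j / 2^(i+1) + 1) := by ring
    _ ≤ 2 ^ i * 2 ^ (d-1-i) := Nat.mul_le_mul_left _ (by omega)
    _ = 2 ^ (d-1) := h1.symm

lemma insB_delB (i j : ℕ) (hb : (j / 2 ^ i) % 2 = 1) : insB i (delB i j) = j := by
  have ha : 0 < 2 ^ i := by positivity
  have h2a : 2 ^ (i+1) = 2 * 2 ^ i := by rw [pow_succ]; ring
  rw [insB, delB, h2a]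
  generalize hA : 2 ^ i = a at *
  set q := j / (2 * a) with hq
  set s := j % a with hs
  have hslt : s < a := Nat.mod_lt _ ha
  have hja : j / a = 2 * q + 1 := by
    have h1 : j / a / 2 = q := by rw [Nat.div_div_eq_div_mul, mul_comm]
    omega
  have hj : j = a * (2 * q + 1) + s := by
    have := Nat.div_add_mod j a
    rw [hja] at this
    omega
  have hdiv : (a * q + s) / a = q := by
    rw [Nat.mul_add_div ha, Nat.div_eq_of_lt hslt, add_zero]
  have hmod : (a * q + s) % a = s := by
    rw [Nat.mul_add_mod, Nat.mod_eq_of_lt hslt]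
  rw [hdiv, hmod, hj]
  ring

lemma le_two_pow_pred (m : ℕ) (hm : 1 ≤ m) : m ≤ 2 ^ (m - 1) := by
  have := Nat.lt_two_pow_self (n := m-1)
  omega


set_option maxHeartbeats 1000000 in
lemma exists_enc (A : Type) [Fintype A] (a : A) (m r N : ℕ) (hr : 1 ≤ r) (hrm : r ≤ m)
    (hN : 0 < N)
    (hcount : N + m * (Fintype.card A) ^ (m - r) ≤ (Fintype.card A) ^ m) :
    ∃ Enc : ℕ → ℕ → A,
      (∀ j₁ j₂, j₁ < N → j₂ < N → (∀ e, e < m → Enc j₁ e = Enc j₂ e) → j₁ = j₂) ∧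
      (∀ j i, j < N → i + r ≤ m → ∃ t, t < r ∧ Enc j (i + t) ≠ a) := by
  classical
  let ext : (Fin m → A) → ℕ → A := fun g p => if h : p < m then g ⟨p, h⟩ else a
  let P : (Fin m → A) → Prop := fun g =>
    ∃ i : ℕ, i + r ≤ m ∧ ∀ t, t < r → ext g (i + t) = a
  have hbadcard : (Finset.univ.filter P).card ≤ m * (Fintype.card A) ^ (m - r) := by
    have hinj : ∃ F : {g : Fin m → A // P g} → Fin m × (Fin (m - r) → A),
        Function.Injective F := by
      have hm : 0 < m := by omega
      refine ⟨fun g => ⟨⟨Nat.find g.2 % m, Nat.mod_lt _ hm⟩,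
        fun t => ext g.1 (if t.val < Nat.find g.2 then t.val else t.val + r)⟩, ?_⟩
      intro g g' heq
      simp only [Prod.mk.injEq, Fin.mk.injEq] at heq
      obtain ⟨hfind0, hrest⟩ := heq
      obtain ⟨hi, hwin⟩ := Nat.find_spec g.2
      obtain ⟨hi', hwin'⟩ := Nat.find_spec g'.2
      have hfl : Nat.find g.2 ≤ m - r := by omega
      have hfl' : Nat.find g'.2 ≤ m - r := by omega
      have hfind : Nat.find g.2 = Nat.find g'.2 := by
        rw [Nat.mod_eq_of_lt (by omega), Nat.mod_eq_of_lt (by omega)] at hfind0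
        exact hfind0
      rw [← hfind] at hrest
      set i0 := Nat.find g.2 with hi0
      apply Subtype.ext
      funext p
      have hext : ∀ q : ℕ, q < m → ext g.1 q = ext g'.1 q := by
        intro q hq
        by_cases h1 : q < i0
        · have hb : q < m - r := by omega
          have := congrFun hrest ⟨q, hb⟩
          simpa [h1] using this
        · by_cases h2 : q < i0 + r
          · have e1 : ext g.1 q = a := by
              have := hwin (q - i0) (by omega)
              rwa [Nat.add_sub_cancel' (by omega)] at this
            have e2 : ext g'.1 q = a := by
              have := hwin' (q - i0) (by omega)
              rw [← hfind] at this
              rwa [Nat.add_sub_cancel' (by omega)] at this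
            rw [e1, e2]
          · have hb : q - r < m - r := by omega
            have := congrFun hrest ⟨q - r, hb⟩
            have hnot : ¬ (q - r < i0) := by omega
            simp only [hnot, if_false] at this
            rwa [Nat.sub_add_cancel (by omega)] at this
      have := hext p.val p.2
      simpa only [ext, p.2, dif_pos, Fin.eta] using this
    obtain ⟨F, hF⟩ := hinj
    calc (Finset.univ.filter P).card = Fintype.card {g : Fin m → A // P g} := by
          rw [Fintype.card_subtype]
        _ ≤ Fintype.card (Fin m × (Fin (m - r) → A)) := Fintype.card_le_of_injective F hF
        _ = m * (Fintype.card A) ^ (m - r) := by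
          simp [Fintype.card_fun]
  have hgoodcard : N ≤ Fintype.card {g : Fin m → A // ¬ P g} := by
    have h1 : (Finset.univ.filter P).card + (Finset.univ.filter (fun g => ¬ P g)).card
        = Fintype.card (Fin m → A) := by
      rw [← Finset.card_univ]
      exact Finset.card_filter_add_card_filter_not _
    have h2 : Fintype.card (Fin m → A) = (Fintype.card A) ^ m := by
      simp [Fintype.card_fun]
    rw [Fintype.card_subtype]
    omega
  have hcard : Fintype.card (Fin N) ≤ Fintype.card {g : Fin m → A // ¬ P g} := by
    simpa using hgoodcard
  obtain ⟨e⟩ := Function.Embedding.nonempty_of_card_le hcard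
  refine ⟨fun j => ext (e ⟨j % N, Nat.mod_lt _ hN⟩).val, ?_, ?_⟩
  · intro j₁ j₂ h1 h2 heq
    have heq2 : (e ⟨j₁ % N, Nat.mod_lt _ hN⟩).val = (e ⟨j₂ % N, Nat.mod_lt _ hN⟩).val := by
      funext p
      have := heq p.val p.2
      simpa only [ext, p.2, dif_pos, Fin.eta] using this
    have := e.injective (Subtype.ext heq2)
    have h3 : j₁ % N = j₂ % N := by simpa using this
    rwa [Nat.mod_eq_of_lt h1, Nat.mod_eq_of_lt h2] at h3
  · intro j i hj hi
    have hnp := (e ⟨j % N, Nat.mod_lt _ hN⟩).2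
    simp only [P, not_exists, not_and, not_forall] at hnp
    obtain ⟨t, ht, hne⟩ := hnp i hi
    exact ⟨t, ht, hne⟩

lemma four_le_of_sub_logb (t : ℝ) (h1 : 1 ≤ t) (h2 : 2 ≤ t - Real.logb 2 t) : 4 ≤ t := by
  by_contra hlt
  push_neg at hlt
  have ht0 : 0 < t := by linarith
  have hlb0 : 0 ≤ Real.logb 2 t := Real.logb_nonneg (by norm_num) h1
  have ht2 : 2 ≤ t := by linarith
  -- convexity: 2^(t-2) ≤ 1 + (3/2)(t-2)
  have hconv : Real.exp ((1 - (t-2)/2) * 0 + ((t-2)/2) * (2 * Real.log 2)) ≤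
      (1 - (t-2)/2) * Real.exp 0 + ((t-2)/2) * Real.exp (2 * Real.log 2) :=
    convexOn_exp.2 (Set.mem_univ _) (Set.mem_univ _)
      (by linarith) (by linarith) (by ring)
  have hexp4 : Real.exp (2 * Real.log 2) = 4 := by
    rw [mul_comm, Real.exp_mul, Real.exp_log (by norm_num)]
    norm_num
  rw [hexp4, Real.exp_zero] at hconv
  have hpow : (2:ℝ) ^ (t - 2) = Real.exp ((t-2)/2 * (2 * Real.log 2)) := by
    rw [Real.rpow_def_of_pos (by norm_num)]
    ring_nf
  have h3 : (2:ℝ) ^ (t - 2) ≤ 1 + (3/2) * (t - 2) := by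
    rw [hpow]
    calc Real.exp ((t-2)/2 * (2 * Real.log 2))
        = Real.exp ((1 - (t-2)/2) * 0 + ((t-2)/2) * (2 * Real.log 2)) := by ring_nf
      _ ≤ (1 - (t-2)/2) * 1 + ((t-2)/2) * 4 := hconv
      _ = 1 + (3/2) * (t - 2) := by ring
  have h4 : t ≤ (2:ℝ) ^ (t - 2) := by
    have := Real.rpow_le_rpow_of_exponent_le (x := 2) (by norm_num) (show Real.logb 2 t ≤ t - 2 by linarith)
    rwa [Real.rpow_logb (by norm_num) (by norm_num) ht0] at this
  linarith

set_option maxHeartbeats 1000000 in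
lemma construct (A : Type) [Fintype A] (a b : A) (hab : a ≠ b)
    (n k d m r : ℕ) (hd : 1 ≤ d) (hr : 1 ≤ r) (hrm : r ≤ m)
    (hk : m + r + 1 ≤ k)
    (hn : 2 ^ (d-1) * (m + r + 1) ≤ n)
    (hcount : 2 ^ d + m * (Fintype.card A) ^ (m - r) ≤ (Fintype.card A) ^ m) :
    ∃ X : Finset (Fin n → A), X.card = d ∧ ∀ f : (Fin n → A) → Bool, ∃ p : List A,
      p.length ≤ k ∧ ∀ s ∈ X, (occursL p s ↔ f s = true) := by
  classical
  obtain ⟨Enc, hEncInj, hEncAv⟩ := exists_enc A a m r (2^d) hr hrm (by positivity) hcount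
  set L : ℕ := m + r + 1 with hL
  have hLpos : 0 < L := by omega
  have hrL : r < L := by omega
  set T : ℕ := 2^(d-1) * L with hT
  have hTn : T ≤ n := hn
  set bc : ℕ → ℕ → A := fun j o =>
    if o < r then a else if o = r then b else Enc j (o - r - 1) with hbc
  have bca : ∀ j o, o < r → bc j o = a := by
    intro j o h; simp only [hbc]; rw [if_pos h]
  have bcb : ∀ j, bc j r = b := by
    intro j; simp only [hbc]; rw [if_neg (by omega)]; simp
  have bce : ∀ j e, bc j (r + 1 + e) = Enc j e := by
    intro j e; simp only [hbc]; rw [if_neg (by omega), if_neg (by omega)]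
    congr 1; omega
  set x : Fin d → Fin n → A := fun i p =>
    if (p : ℕ) < T then bc (insB i.val ((p : ℕ) / L)) ((p : ℕ) % L) else b with hx
  have xval : ∀ (i : Fin d) (p : ℕ) (hp : p < n),
      x i ⟨p, hp⟩ = if p < T then bc (insB i.val (p / L)) (p % L) else b := by
    intro i p hp; rfl
  have divmodL : ∀ w ofs : ℕ, ofs < L → (w * L + ofs) / L = w ∧ (w * L + ofs) % L = ofs := by
    intro w ofs h
    constructor
    · rw [mul_comm, Nat.mul_add_div hLpos, Nat.div_eq_of_lt h, add_zero]
    · rw [mul_comm, Nat.mul_add_mod, Nat.mod_eq_of_lt h]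
  have strval : ∀ (i : Fin d) (w ofs : ℕ), w < 2^(d-1) → ofs < L →
      ∀ (p : ℕ) (hp : p < n), p = w * L + ofs → x i ⟨p, hp⟩ = bc (insB i.val w) ofs := by
    intro i w ofs hw hofs p hp hpe
    have hsucc : (w + 1) * L = w * L + L := by ring
    have hmul : (w + 1) * L ≤ 2^(d-1) * L := Nat.mul_le_mul_right L (by omega)
    have hpT : p < T := by rw [hT]; omega
    rw [xval, if_pos hpT, hpe, (divmodL w ofs hofs).1, (divmodL w ofs hofs).2]
  have strpad : ∀ (i : Fin d) (p : ℕ) (hp : p < n), T ≤ p → x i ⟨p, hp⟩ = b := by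
    intro i p hp hTp
    rw [xval, if_neg (by omega)]
  set P : ℕ → List A := fun j => List.ofFn (fun t : Fin L => bc j t.val) with hP
  have hPlen : ∀ j, (P j).length = L := by intro j; simp [hP, hL]
  have hPget : ∀ j (t : Fin (P j).length), (P j).get t = bc j t.val :=
    fun j t => List.get_ofFn _ t
  -- main occurrence characterization
  have occ : ∀ (i : Fin d) (j : ℕ), j < 2^d →
      (occursL (P j) (x i) ↔ (j / 2 ^ i.val) % 2 = 1) := by
    intro i j hj
    constructor
    · rintro ⟨q, hqle, hchars⟩
      rw [hPlen] at hqle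
      have charAt : ∀ t : ℕ, t < L → ∀ (hp : q + t < n), x i ⟨q + t, hp⟩ = bc j t := by
        intro t ht hp
        have h2 : t < (P j).length := by rw [hPlen]; omega
        have := hchars ⟨t, h2⟩
        rw [hPget] at this
        exact this
      -- q < T
      have hqT : q < T := by
        by_contra hge
        have h0 := charAt 0 (by omega) (by omega)
        rw [strpad i (q + 0) (by omega) (by omega)] at h0
        rw [bca j 0 (by omega)] at h0
        exact hab h0.symm
      set u : ℕ := q / L with hu
      set o : ℕ := q % L with ho
      have hoL : o < L := Nat.mod_lt _ hLpos
      have hque : q = u * L + o := by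
        rw [hu, ho, mul_comm]; exact (Nat.div_add_mod q L).symm
      have hult : u < 2^(d-1) := by
        rw [hu, Nat.div_lt_iff_lt_mul hLpos]
        rw [hT] at hqT
        exact hqT
      have hins : insB i.val u < 2^d := insB_lt d i.val u i.isLt hult
      -- o = 0
      have ho0 : o = 0 := by
        by_contra ho1
        have ho1' : 1 ≤ o := by omega
        by_cases hc1 : o ≤ r
        · -- pattern pos r - o hits the b of block u
          have h1 := charAt (r - o) (by omega) (by omega)
          rw [strval i u r hult hrL _ _ (by omega)] at h1
          rw [bcb, bca j (r - o) (by omega)] at h1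
          exact hab h1.symm
        · by_cases hc2 : o + r ≤ L
          · -- window inside Enc of block u
            obtain ⟨t, htr, hne⟩ := hEncAv (insB i.val u) (o - r - 1) hins (by omega)
            have h1 := charAt t (by omega) (by omega)
            rw [strval i u (o + t) hult (by omega) _ _ (by omega)] at h1
            have he : o + t = r + 1 + (o - r - 1 + t) := by omega
            rw [he, bce, bca j t (by omega)] at h1
            exact hne h1
          · have hsucc : (u + 1) * L = u * L + L := by ring
            by_cases hc3 : u + 1 < 2^(d-1)
            · -- pattern pos r hits an 'a' of block u+1
              have h1 := charAt r (by omega) (by omega)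
              rw [strval i (u+1) (o + r - L) hc3 (by omega) _ _ (by omega)] at h1
              rw [bca _ (o + r - L) (by omega), bcb] at h1
              exact hab h1
            · -- pattern pos L - o hits the padding
              have h1 := charAt (L - o) (by omega) (by omega)
              have hTle : T ≤ q + (L - o) := by
                have : 2^(d-1) ≤ u + 1 := by omega
                have h2 : 2^(d-1) * L ≤ (u+1) * L := Nat.mul_le_mul_right L this
                have h3 : (u+1) * L = u * L + L := by ring
                rw [hT]
                omega
              rw [strpad i _ _ hTle] at h1
              rw [bca j (L - o) (by omega)] at h1
              exact hab h1.symm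
      -- aligned: compare Enc values
      have hEncEq : ∀ e, e < m → Enc j e = Enc (insB i.val u) e := by
        intro e he
        have h1 := charAt (r + 1 + e) (by omega) (by omega)
        rw [strval i u (r + 1 + e) hult (by omega) _ _ (by omega)] at h1
        rw [bce, bce] at h1
        exact h1.symm
      have hjeq : j = insB i.val u := hEncInj j (insB i.val u) hj hins hEncEq
      rw [hjeq]
      exact insB_bit i.val u
    · intro hbit
      set u : ℕ := delB i.val j with hu
      have hult : u < 2^(d-1) := delB_lt d i.val j i.isLt hj
      have hsucc : (u + 1) * L = u * L + L := by ring
      have hmul : (u + 1) * L ≤ 2^(d-1) * L := Nat.mul_le_mul_right L (by omega)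
      have hle : u * L + (P j).length ≤ n := by
        rw [hPlen]
        rw [hT] at hTn
        omega
      refine ⟨u * L, hle, fun t => ?_⟩
      have htL : t.val < L := lt_of_lt_of_eq t.isLt (hPlen j)
      rw [hPget]
      rw [strval i u t.val hult htL _ _ rfl]
      rw [insB_delB i.val j hbit]
  -- distinctness
  have hxinj : Function.Injective x := by
    intro i i' hii
    by_contra hne
    have hne' : i.val ≠ i'.val := fun h => hne (Fin.ext h)
    have h1 : (2 ^ i.val / 2 ^ i.val) % 2 = 1 := by
      rw [Nat.div_self (by positivity)]
    have hj : 2 ^ i.val < 2 ^ d := Nat.pow_lt_pow_right (by norm_num) i.isLt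
    have h2 : (2 ^ i.val / 2 ^ i'.val) % 2 = 0 := by
      rcases Nat.lt_or_ge i.val i'.val with h | h
      · rw [Nat.div_eq_of_lt (Nat.pow_lt_pow_right (by norm_num) h)]
      · have : i'.val < i.val := by omega
        have hdd : 2 ^ i.val / 2 ^ i'.val = 2 ^ (i.val - i'.val) := by
          rw [Nat.pow_div (by omega) (by norm_num)]
        rw [hdd]
        have h3 : i.val - i'.val - 1 + 1 = i.val - i'.val := by omega
        rw [← h3, pow_succ]
        simp [Nat.mul_mod]
    have o1 := (occ i (2 ^ i.val) hj).mpr h1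
    have o2 := (occ i' (2 ^ i.val) hj)
    rw [← hii] at o2
    have := o2.mp o1
    omega
  refine ⟨Finset.image x Finset.univ, ?_, ?_⟩
  · rw [Finset.card_image_of_injective _ hxinj, Finset.card_univ, Fintype.card_fin]
  · intro f
    set l : List Bool := List.ofFn (fun i : Fin d => f (x i)) with hl
    set j : ℕ := natOf l with hj
    have hjlt : j < 2 ^ d := by
      have h := natOf_lt l
      have hlen : l.length = d := by simp [hl]
      rw [hlen] at h
      exact h
    refine ⟨P j, by rw [hPlen]; exact hk, ?_⟩
    intro s hs
    obtain ⟨i, -, rfl⟩ := Finset.mem_image.mp hs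
    have hlen : l.length = d := by simp [hl]
    have hi : i.val < l.length := lt_of_lt_of_eq i.isLt hlen.symm
    have hget : l.getD i.val false = f (x i) := by
      rw [List.getD_eq_getElem l false hi]
      simp only [hl, List.getElem_ofFn, Fin.eta]
    have hbit : (j / 2 ^ i.val) % 2 = cond (f (x i)) 1 0 := by
      have h := natOf_bit l i.val
      rw [hget] at h
      exact h
    rw [occ i j hjlt, hbit]
    cases f (x i) <;> simp


set_option maxHeartbeats 4000000 in
/-- VC lower bound for pattern learning: with
`m = ⌊min(k - log₂ k - 3, log₂ n/log₂|Σ| - log₂ log₂ n/log₂|Σ| + 1)⌋` and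
`d = ⌊(m-1)·log₂|Σ|⌋`, there is a set of `d` strings in `Σ^n` shattered by the
class of substring indicators of patterns of length at most `k`. -/
theorem vc_lower_bound (A : Type) [Fintype A] (h2 : 2 ≤ Fintype.card A)
    (n k : ℕ) (hk : 1 ≤ k) (hn : 2 ≤ n)
    (hyp : ((k : ℝ) - Real.logb 2 k - 5) * Real.logb 2 (Fintype.card A) ≤
      Real.logb 2 n - Real.logb 2 (Real.logb 2 n)) :
    ∃ X : Finset (Fin n → A),
      X.card =
        ⌊(((⌊min ((k : ℝ) - Real.logb 2 k - 3)
              (Real.logb 2 n / Real.logb 2 (Fintype.card A) -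
                Real.logb 2 (Real.logb 2 n) / Real.logb 2 (Fintype.card A) + 1)⌋ : ℤ) : ℝ)
            - 1) * Real.logb 2 (Fintype.card A)⌋₊ ∧
      (∀ f : (Fin n → A) → Bool, ∃ p : List A, p.length ≤ k ∧
        ∀ s ∈ X, (occursL p s ↔ f s = true)) := by
  classical
  obtain ⟨a, b, hab⟩ := Fintype.exists_pair_of_one_lt_card (show 1 < Fintype.card A by omega)
  set c : ℕ := Fintype.card A with hc
  set lc : ℝ := Real.logb 2 c with hlc
  set t : ℝ := Real.logb 2 n with ht
  set mZ : ℤ := ⌊min ((k : ℝ) - Real.logb 2 k - 3) (t / lc - Real.logb 2 t / lc + 1)⌋ with hmZ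
  set D : ℕ := ⌊((mZ : ℝ) - 1) * lc⌋₊ with hD
  rcases Nat.lt_or_ge D 2 with hD2 | hD2
  · rcases Nat.lt_or_ge D 1 with hD1 | hD1
    · -- D = 0 : empty set
      refine ⟨∅, by rw [Finset.card_empty]; omega, fun f => ⟨[], by simpa using hk, ?_⟩⟩
      intro s hs
      exact absurd hs (by simp)
    · -- D = 1 : a single constant string
      refine ⟨{fun _ => a}, by rw [Finset.card_singleton]; omega, ?_⟩
      intro f
      by_cases hf : f (fun _ => a) = true
      · refine ⟨[a], by simpa using hk, ?_⟩
        intro s hs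
        rw [Finset.mem_singleton] at hs
        subst hs
        rw [hf]
        simp only [iff_true]
        refine ⟨0, by simp only [List.length_cons, List.length_nil]; omega, fun tt => ?_⟩
        simp
      · refine ⟨[b], by simpa using hk, ?_⟩
        intro s hs
        rw [Finset.mem_singleton] at hs
        subst hs
        constructor
        · rintro ⟨q, hle, hch⟩
          have h0 : a = b := by simpa using hch ⟨0, by simp⟩
          exact absurd h0 hab
        · intro h
          exact absurd h hf
  · -- main case : D ≥ 2
    have hc2 : 2 ≤ c := h2
    have hcR : (2:ℝ) ≤ (c:ℝ) := by exact_mod_cast hc2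
    have hcpos : (0:ℝ) < c := by linarith
    have hnR : (2:ℝ) ≤ (n:ℝ) := by exact_mod_cast hn
    have hnpos : (0:ℝ) < n := by linarith
    have hkR : (1:ℝ) ≤ (k:ℝ) := by exact_mod_cast hk
    have hlc1 : 1 ≤ lc := by
      have h := Real.logb_le_logb_of_le (b := 2) (by norm_num) (show (0:ℝ) < 2 by norm_num) hcR
      rwa [Real.logb_self_eq_one (by norm_num)] at h
    have hlcpos : 0 < lc := by linarith
    have ht1 : 1 ≤ t := by
      have h := Real.logb_le_logb_of_le (b := 2) (by norm_num) (show (0:ℝ) < 2 by norm_num) hnR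
      rwa [Real.logb_self_eq_one (by norm_num)] at h
    have htpos : 0 < t := by linarith
    have hy1 : 1 ≤ ((mZ : ℝ) - 1) * lc := by
      by_contra hy
      push_neg at hy
      have : D = 0 := by rw [hD]; exact Nat.floor_eq_zero.mpr hy
      omega
    have hy0 : 0 ≤ ((mZ : ℝ) - 1) * lc := by linarith
    have hDle : (D : ℝ) ≤ ((mZ : ℝ) - 1) * lc := by rw [hD]; exact Nat.floor_le hy0
    have hmZR : (1:ℝ) < (mZ : ℝ) := by nlinarith
    have hmZ2 : (2:ℤ) ≤ mZ := by
      have : (1:ℤ) < mZ := by exact_mod_cast hmZR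
      omega
    set m : ℕ := mZ.toNat with hm
    have hm2 : 2 ≤ m := by omega
    have hmcast : ((m:ℕ) : ℝ) = (mZ : ℝ) := by
      have h0 : (0:ℤ) ≤ mZ := by omega
      rw [hm]
      exact_mod_cast congrArg (fun z : ℤ => (z : ℝ)) (Int.toNat_of_nonneg h0)
    have hminle : (mZ : ℝ) ≤ min ((k : ℝ) - Real.logb 2 k - 3) (t / lc - Real.logb 2 t / lc + 1) := by
      rw [hmZ]; exact Int.floor_le _
    have hS1 : (m : ℝ) ≤ (k : ℝ) - Real.logb 2 k - 3 := by
      rw [hmcast]; exact hminle.trans (min_le_left _ _)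
    have hS2 : (m : ℝ) ≤ t / lc - Real.logb 2 t / lc + 1 := by
      rw [hmcast]; exact hminle.trans (min_le_right _ _)
    have hkey : ((m : ℝ) - 1) * lc ≤ t - Real.logb 2 t := by
      have h1 : (m : ℝ) - 1 ≤ (t - Real.logb 2 t) / lc := by
        rw [sub_div]
        linarith
      exact (le_div_iff₀ hlcpos).mp h1
    have h2key : 2 ≤ t - Real.logb 2 t := by
      have hD2R : (2:ℝ) ≤ (D : ℝ) := by exact_mod_cast hD2
      rw [← hmcast] at hDle
      linarith
    have ht4 : 4 ≤ t := four_le_of_sub_logb t ht1 h2key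
    have hlbt2 : 2 ≤ Real.logb 2 t := by
      have h := Real.logb_le_logb_of_le (b := 2) (by norm_num) (show (0:ℝ) < 4 by norm_num) ht4
      have h4 : Real.logb 2 4 = 2 := by
        rw [show (4:ℝ) = 2 ^ (2:ℕ) by norm_num, Real.logb_pow,
          Real.logb_self_eq_one (by norm_num)]
        norm_num
      rwa [h4] at h
    set r : ℕ := Nat.clog 2 m + 1 with hr
    have hrm : r ≤ m := by
      have := (Nat.clog_le_iff_le_pow (by norm_num)).mpr (le_two_pow_pred m (by omega))
      omega
    have hclog_nat : Nat.clog 2 m ≤ Nat.log 2 m + 1 :=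
      (Nat.clog_le_iff_le_pow (by norm_num)).mpr (Nat.lt_pow_succ_log_self (by norm_num) m).le
    have hmpos : (0:ℝ) < (m:ℝ) := by
      have : (0:ℕ) < m := by omega
      exact_mod_cast this
    have hlogR : (Nat.log 2 m : ℝ) ≤ Real.logb 2 m := by
      have h1 : (2:ℕ) ^ Nat.log 2 m ≤ m := Nat.pow_log_le_self 2 (by omega)
      have h1R : ((2:ℝ)) ^ (Nat.log 2 m : ℕ) ≤ (m:ℝ) := by exact_mod_cast h1
      have h3 := Real.logb_le_logb_of_le (b := 2) (by norm_num) (by positivity) h1R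
      rwa [Real.logb_pow, Real.logb_self_eq_one (by norm_num), mul_one] at h3
    have hlogk0 : 0 ≤ Real.logb 2 k := Real.logb_nonneg (by norm_num) hkR
    have hmk : (m : ℝ) ≤ (k : ℝ) := by linarith
    have hlogmk : Real.logb 2 m ≤ Real.logb 2 k :=
      Real.logb_le_logb_of_le (by norm_num) hmpos hmk
    have hcl : (Nat.clog 2 m : ℝ) ≤ Real.logb 2 m + 1 := by
      have h1 : (Nat.clog 2 m : ℝ) ≤ (Nat.log 2 m : ℝ) + 1 := by exact_mod_cast hclog_nat
      linarith
    have hkgoal : m + r + 1 ≤ k := by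
      have hreal : ((m + r + 1 : ℕ) : ℝ) ≤ (k : ℝ) := by push_cast [hr]; linarith
      exact_mod_cast hreal
    -- length of all strings fits in n
    have hmt : (m : ℝ) ≤ t := by
      have h1 : (m : ℝ) - 1 ≤ ((m:ℝ) - 1) * lc := by nlinarith
      linarith
    have hlogmt : Real.logb 2 m ≤ Real.logb 2 t := by
      have := Real.logb_le_logb_of_le (b := 2) (by norm_num) hmpos hmt
      exact this
    have hL2t : (m : ℝ) + ((Nat.clog 2 m : ℝ) + 1) + 1 ≤ 2 * t := by
      have h1 : (m : ℝ) - 1 ≤ ((m:ℝ) - 1) * lc := by nlinarith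
      linarith
    have hngoal : 2 ^ (D - 1) * (m + r + 1) ≤ n := by
      have hDleR : (D:ℝ) ≤ ((m:ℝ) - 1) * lc := by rw [hmcast]; exact hDle
      have e1 : (2:ℝ) ^ (((D - 1 : ℕ)) : ℝ) ≤ (2:ℝ) ^ (t - Real.logb 2 t - 1) := by
        apply Real.rpow_le_rpow_of_exponent_le (by norm_num)
        have hc1 : (((D - 1 : ℕ)) : ℝ) = (D : ℝ) - 1 := by
          have h1 : 1 ≤ D := by omega
          push_cast [h1]
          ring
        rw [hc1]
        linarith
      have e2 : (2:ℝ) ^ (t - Real.logb 2 t - 1) = (n : ℝ) / (2 * t) := by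
        rw [show t - Real.logb 2 t - 1 = t - (Real.logb 2 t + 1) by ring,
          Real.rpow_sub (by norm_num), Real.rpow_add (by norm_num),
          Real.rpow_logb (by norm_num) (by norm_num) htpos,
          Real.rpow_one, ht, Real.rpow_logb (by norm_num) (by norm_num) hnpos]
        ring
      have e3 : (2:ℝ) ^ ((D - 1 : ℕ)) * ((m:ℝ) + ((Nat.clog 2 m : ℝ) + 1) + 1) ≤ (n:ℝ) := by
        have h4 : (2:ℝ) ^ ((D - 1 : ℕ)) ≤ (n : ℝ) / (2 * t) := by
          rw [← Real.rpow_natCast 2 (D - 1)]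
          rw [e2] at e1
          exact e1
        have h5 : (0:ℝ) ≤ (m:ℝ) + ((Nat.clog 2 m : ℝ) + 1) + 1 := by positivity
        have h6 : (0:ℝ) ≤ (n:ℝ) / (2 * t) := by positivity
        calc (2:ℝ) ^ ((D - 1 : ℕ)) * ((m:ℝ) + ((Nat.clog 2 m : ℝ) + 1) + 1)
            ≤ ((n:ℝ) / (2 * t)) * (2 * t) := mul_le_mul h4 hL2t h5 h6
          _ = (n:ℝ) := div_mul_cancel₀ _ (by positivity)
      have : ((2 ^ (D - 1) * (m + r + 1) : ℕ) : ℝ) ≤ (n : ℝ) := by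
        push_cast [hr]
        exact e3
      exact_mod_cast this
    -- counting bound
    have hAcount : 2 ^ D ≤ c ^ (m - 1) := by
      have e1 : (2:ℝ) ^ ((D : ℕ)) ≤ (2:ℝ) ^ (((mZ:ℝ) - 1) * lc) := by
        rw [← Real.rpow_natCast 2 D]
        exact Real.rpow_le_rpow_of_exponent_le (by norm_num) hDle
      have e2 : (2:ℝ) ^ (((mZ:ℝ) - 1) * lc) = (c:ℝ) ^ ((m - 1 : ℕ)) := by
        rw [mul_comm, Real.rpow_mul (by norm_num), hlc,
          Real.rpow_logb (by norm_num) (by norm_num) hcpos]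
        rw [← Real.rpow_natCast (c:ℝ) (m - 1)]
        congr 1
        rw [← hmcast]
        have : 1 ≤ m := by omega
        push_cast [this]
        ring
      rw [e2] at e1
      exact_mod_cast e1
    have h2m_pow : 2 * m ≤ c ^ r := by
      have h1 : m ≤ 2 ^ Nat.clog 2 m := Nat.le_pow_clog (by norm_num) m
      have h2 : 2 * m ≤ 2 ^ r := by rw [hr, pow_succ]; omega
      have h3 : (2:ℕ) ^ r ≤ c ^ r := Nat.pow_le_pow_left hc2 r
      omega
    have hcount : 2 ^ D + m * c ^ (m - r) ≤ c ^ m := by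
      have epow : c ^ r * c ^ (m - r) = c ^ m := by
        rw [← pow_add]; congr 1; omega
      have epow2 : c * c ^ (m - 1) = c ^ m := by
        rw [← pow_succ']; congr 1; omega
      have h1 : 2 * 2 ^ D ≤ c ^ m := by
        have ha : 2 * 2 ^ D ≤ 2 * c ^ (m-1) := by omega
        have hb2 : 2 * c ^ (m-1) ≤ c * c ^ (m-1) := Nat.mul_le_mul_right _ hc2
        omega
      have h2' : 2 * (m * c ^ (m - r)) ≤ c ^ m := by
        have ha := Nat.mul_le_mul_right (c ^ (m - r)) h2m_pow
        have hb2 : 2 * m * c ^ (m-r) = 2 * (m * c ^ (m - r)) := by ring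
        omega
      omega
    obtain ⟨X, hX1, hX2⟩ := construct A a b hab n k D m r (by omega) (by omega) hrm
      hkgoal hngoal hcount
    exact ⟨X, hX1, hX2⟩
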